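/- (Non-expansivity of the Ornstein–Uhlenbeck semigroup on Orlicz integrals) Let Φ : ℝ → ℝ be convex, let f ∈ C⁰_poly(ℝⁿ) with Φ∘f integrable with respect to γ, and let t ≥ 0. Then ∫ Φ( P_t f(x) ) dγ(x) ≤ ∫ Φ( f(x) ) dγ(x). -/

import Mathlib

noncomputable section
open MeasureTheory Real ENNReal

/-- The standard Gaussian probability measure on `ℝⁿ`, with density
`(2π)^{-n/2} exp(-|x|²/2)` with respect to Lebesgue measure. -/
def stdGaussian (n : ℕ) : Measure (EuclideanSpace ℝ (Fin n)) :=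
  volume.withDensity fun x => ENNReal.ofReal ((2 * π) ^ (-(n : ℝ) / 2) * Real.exp (-‖x‖ ^ 2 / 2))

/-- `C^k_poly(ℝⁿ)`: `k`-times continuously differentiable functions which, together with
all derivatives up to order `k`, are bounded by a polynomial. -/
def CPoly (n k : ℕ) (f : EuclideanSpace ℝ (Fin n) → ℝ) : Prop :=
  ContDiff ℝ k f ∧
    ∀ i ≤ k, ∃ C : ℝ, ∃ N : ℕ, ∀ x, ‖iteratedFDeriv ℝ i f x‖ ≤ C * (1 + ‖x‖) ^ N

/-- The Ornstein–Uhlenbeck semigroup: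
`P_t f(x) = ∫ f(e^{-t} x + √(1 - e^{-2t}) y) dγ(y)`. -/
def ouSemigroup (n : ℕ) (t : ℝ) (f : EuclideanSpace ℝ (Fin n) → ℝ)
    (x : EuclideanSpace ℝ (Fin n)) : ℝ :=
  ∫ y, f (Real.exp (-t) • x + Real.sqrt (1 - Real.exp (-2 * t)) • y) ∂stdGaussian n


variable {n : ℕ}

abbrev Wn (n : ℕ) := EuclideanSpace ℝ (Fin n)
abbrev Qn (n : ℕ) := EuclideanSpace ℝ (Fin n ⊕ Fin n)

def rotAux (n : ℕ) (c s : ℝ) : Qn n →ₗ[ℝ] Qn n where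
  toFun z := WithLp.toLp 2 (fun j => Sum.elim (fun i => c * z (Sum.inl i) + s * z (Sum.inr i))
      (fun i => -s * z (Sum.inl i) + c * z (Sum.inr i)) j)
  map_add' a b := by
    ext j
    rcases j with i | i <;> simp [PiLp.add_apply] <;> ring
  map_smul' r a := by
    ext j
    rcases j with i | i <;> simp [PiLp.smul_apply, smul_eq_mul] <;> ring

lemma rotAux_comp (c s : ℝ) (h : c ^ 2 + s ^ 2 = 1) (z : Qn n) :
    rotAux n c s (rotAux n c (-s) z) = z := by
  ext j
  rcases j with i | i
  · simp only [rotAux, LinearMap.coe_mk, AddHom.coe_mk, PiLp.toLp_apply, Sum.elim_inl, Sum.elim_inr]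
    linear_combination (z (Sum.inl i)) * h
  · simp only [rotAux, LinearMap.coe_mk, AddHom.coe_mk, PiLp.toLp_apply, Sum.elim_inl, Sum.elim_inr]
    linear_combination (z (Sum.inr i)) * h

def rotL (n : ℕ) (c s : ℝ) (h : c ^ 2 + s ^ 2 = 1) : Qn n ≃ₗ[ℝ] Qn n :=
  LinearEquiv.ofLinear (rotAux n c s) (rotAux n c (-s))
    (LinearMap.ext fun z => rotAux_comp c s h z)
    (LinearMap.ext fun z => by
      have := rotAux_comp c (-s) (by linear_combination h) z
      simpa using this)

lemma rot_norm (c s : ℝ) (h : c ^ 2 + s ^ 2 = 1) (z : Qn n) :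
    ‖rotAux n c s z‖ = ‖z‖ := by
  rw [EuclideanSpace.norm_eq, EuclideanSpace.norm_eq]
  congr 1
  rw [Fintype.sum_sum_type, Fintype.sum_sum_type]
  rw [← Finset.sum_add_distrib, ← Finset.sum_add_distrib]
  refine Finset.sum_congr rfl fun i _ => ?_
  simp only [rotAux, LinearMap.coe_mk, AddHom.coe_mk, PiLp.toLp_apply, Sum.elim_inl, Sum.elim_inr,
    Real.norm_eq_abs, sq_abs]
  linear_combination (z (Sum.inl i) ^ 2 + z (Sum.inr i) ^ 2) * h

def LinearIsometryEquiv.toMeasureEquiv (f : Qn n ≃ₗᵢ[ℝ] Qn n) : Qn n ≃ᵐ Qn n where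
  toEquiv := f.toEquiv
  measurable_toFun := f.continuous.measurable
  measurable_invFun := f.symm.continuous.measurable

@[simp] lemma LinearIsometryEquiv.coe_toMeasureEquiv (f : Qn n ≃ₗᵢ[ℝ] Qn n) :
    ⇑f.toMeasureEquiv = f := rfl

def rotIso (n : ℕ) (c s : ℝ) (h : c ^ 2 + s ^ 2 = 1) : Qn n ≃ₗᵢ[ℝ] Qn n :=
  ⟨rotL n c s h, fun z => rot_norm c s h z⟩

def splitEquiv (n : ℕ) : Qn n ≃ᵐ Wn n × Wn n :=
  ((MeasurableEquiv.toLp 2 (Fin n ⊕ Fin n → ℝ)).symm).trans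
    ((MeasurableEquiv.sumPiEquivProdPi fun _ => ℝ).trans
      (((MeasurableEquiv.toLp 2 (Fin n → ℝ)).symm.symm).prodCongr
        ((MeasurableEquiv.toLp 2 (Fin n → ℝ)).symm.symm)))

lemma splitEquiv_mp (n : ℕ) : MeasurePreserving (splitEquiv n) volume volume := by
  have h1 := EuclideanSpace.volume_preserving_symm_measurableEquiv_toLp (Fin n ⊕ Fin n)
  have h2 := MeasureTheory.volume_measurePreserving_sumPiEquivProdPi (fun _ : Fin n ⊕ Fin n => ℝ)
  have h3 := ((EuclideanSpace.volume_preserving_symm_measurableEquiv_toLp (Fin n)).symm).prod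
    ((EuclideanSpace.volume_preserving_symm_measurableEquiv_toLp (Fin n)).symm)
  exact (h3.comp h2).comp h1

lemma map_withDensity_comp {α β : Type*} [MeasurableSpace α] [MeasurableSpace β]
    (e : α ≃ᵐ β) (μ : Measure α) {ρ : β → ℝ≥0∞} (hρ : Measurable ρ) :
    Measure.map e (μ.withDensity (ρ ∘ e)) = (Measure.map e μ).withDensity ρ := by
  ext s hs
  rw [Measure.map_apply e.measurable hs, withDensity_apply _ hs,
    withDensity_apply _ (e.measurable hs), MeasureTheory.setLIntegral_map hs hρ e.measurable]
  rfl

lemma withDensity_prod {α β : Type*} [MeasurableSpace α] [MeasurableSpace β]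
    (μ : Measure α) (ν : Measure β) [SigmaFinite μ] [SigmaFinite ν]
    (f : α → ℝ≥0∞) (g : β → ℝ≥0∞) (hf : Measurable f) (hg : Measurable g)
    [SigmaFinite (μ.withDensity f)] [SigmaFinite (ν.withDensity g)] :
    (μ.prod ν).withDensity (fun p => f p.1 * g p.2)
      = (μ.withDensity f).prod (ν.withDensity g) := by
  refine (Measure.prod_eq (μ := μ.withDensity f) (ν := ν.withDensity g) (fun s t hs ht => ?_)).symm
  rw [withDensity_apply _ (hs.prod ht), ← Measure.prod_restrict,
    lintegral_prod_mul hf.aemeasurable hg.aemeasurable,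
    withDensity_apply _ hs, withDensity_apply _ ht]

lemma dens1_measurable (n : ℕ) : Measurable (fun x : Wn n =>
    ENNReal.ofReal ((2 * π) ^ (-(n : ℝ) / 2) * Real.exp (-‖x‖ ^ 2 / 2))) := by
  fun_prop

lemma splitEquiv_norm (z : Qn n) :
    ‖z‖ ^ 2 = ‖((splitEquiv n) z).1‖ ^ 2 + ‖((splitEquiv n) z).2‖ ^ 2 := by
  rw [EuclideanSpace.norm_eq, EuclideanSpace.norm_eq, EuclideanSpace.norm_eq,
    Real.sq_sqrt (by positivity), Real.sq_sqrt (by positivity), Real.sq_sqrt (by positivity)]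
  have h1 : ∀ i, ((splitEquiv n) z).1 i = z (Sum.inl i) := fun i => rfl
  have h2 : ∀ i, ((splitEquiv n) z).2 i = z (Sum.inr i) := fun i => rfl
  simp only [h1, h2]
  rw [← Fintype.sum_sum_type (fun j : Fin n ⊕ Fin n => ‖z j‖ ^ 2)]

lemma integrable_exp_neg_norm_sq (n : ℕ) (b : ℝ) (hb : 0 < b) :
    Integrable (fun v : EuclideanSpace ℝ (Fin n) => rexp (-b * ‖v‖^2)) := by
  have h := (GaussianFourier.integrable_cexp_neg_mul_sq_norm_add
    (V := EuclideanSpace ℝ (Fin n)) (b := (b : ℂ)) (by simpa using hb) 0 0).norm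
  convert h using 2 with v
  simp [Complex.norm_exp]
  left
  norm_cast

lemma stdGaussian_isProb (n : ℕ) : IsProbabilityMeasure (stdGaussian n) := by
  constructor
  rw [stdGaussian, withDensity_apply _ MeasurableSet.univ, Measure.restrict_univ]
  have hint : Integrable (fun x : EuclideanSpace ℝ (Fin n) =>
      (2 * π) ^ (-(n : ℝ) / 2) * rexp (-‖x‖ ^ 2 / 2)) := by
    have := (integrable_exp_neg_norm_sq n (1/2) (by norm_num)).const_mul ((2 * π) ^ (-(n : ℝ) / 2))
    convert this using 3 with x
    ring_nf
  rw [← ofReal_integral_eq_lintegral_ofReal hint]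
  · have h2 : ∫ x : EuclideanSpace ℝ (Fin n), (2 * π) ^ (-(n : ℝ) / 2) * rexp (-‖x‖ ^ 2 / 2)
        = (2 * π) ^ (-(n : ℝ) / 2) * ∫ x : EuclideanSpace ℝ (Fin n), rexp (-(1/2) * ‖x‖ ^ 2) := by
      rw [integral_const_mul]
      exact congrArg _ (integral_congr_ae (Filter.Eventually.of_forall fun x => by ring_nf))
    rw [h2, GaussianFourier.integral_rexp_neg_mul_sq_norm (by norm_num : (0:ℝ) < 1/2)]
    have h3 : (π / (1/2) : ℝ) = 2 * π := by ring
    rw [h3, finrank_euclideanSpace_fin, ← Real.rpow_add (by positivity)]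
    rw [neg_div, neg_add_cancel, Real.rpow_zero, ENNReal.ofReal_one]
  · filter_upwards with x
    positivity

theorem stdGaussian_map_rot (n : ℕ) (c s : ℝ) (h : c ^ 2 + s ^ 2 = 1) :
    Measure.map (fun p : Wn n × Wn n => c • p.1 + s • p.2)
      ((stdGaussian n).prod (stdGaussian n)) = stdGaussian n := by
  haveI hP : IsProbabilityMeasure (stdGaussian n) := stdGaussian_isProb n
  let K : ℝ := (2 * π) ^ (-(n : ℝ) / 2)
  let d1 : Wn n → ℝ≥0∞ := fun x => ENNReal.ofReal (K * rexp (-‖x‖ ^ 2 / 2))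
  let dQ : Qn n → ℝ≥0∞ := fun z => ENNReal.ofReal (K * K * rexp (-‖z‖ ^ 2 / 2))
  have hKpos : 0 < K := by positivity
  have hd1 : Measurable d1 := by fun_prop
  have hdQ : Measurable dQ := by fun_prop
  have hD : Measurable (fun p : Wn n × Wn n => d1 p.1 * d1 p.2) :=
    (hd1.comp measurable_fst).mul (hd1.comp measurable_snd)
  have key1 : (fun p : Wn n × Wn n => d1 p.1 * d1 p.2) ∘ (splitEquiv n) = dQ := by
    funext z
    simp only [Function.comp_apply, d1, dQ]
    rw [← ENNReal.ofReal_mul (by positivity)]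
    congr 1
    rw [splitEquiv_norm z]
    have e : rexp (-(‖((splitEquiv n) z).1‖ ^ 2 + ‖((splitEquiv n) z).2‖ ^ 2) / 2)
        = rexp (-‖((splitEquiv n) z).1‖ ^ 2 / 2) * rexp (-‖((splitEquiv n) z).2‖ ^ 2 / 2) := by
      rw [← Real.exp_add]; congr 1; ring
    rw [e]; ring
  haveI : SigmaFinite (volume.withDensity d1) := by
    have : IsProbabilityMeasure (volume.withDensity d1) := stdGaussian_isProb n
    infer_instance
  have prodEq : (stdGaussian n).prod (stdGaussian n)
      = Measure.map (splitEquiv n) (volume.withDensity dQ) := by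
    calc (stdGaussian n).prod (stdGaussian n)
        = (volume.prod volume).withDensity (fun p => d1 p.1 * d1 p.2) :=
          (withDensity_prod volume volume d1 d1 hd1 hd1).symm
      _ = volume.withDensity (fun p => d1 p.1 * d1 p.2) := by rw [← Measure.volume_eq_prod]
      _ = (Measure.map (splitEquiv n) volume).withDensity (fun p => d1 p.1 * d1 p.2) := by
          rw [(splitEquiv_mp n).map_eq]
      _ = Measure.map (splitEquiv n)
            (volume.withDensity ((fun p : Wn n × Wn n => d1 p.1 * d1 p.2) ∘ (splitEquiv n))) :=
          (map_withDensity_comp (splitEquiv n) volume hD).symm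
      _ = Measure.map (splitEquiv n) (volume.withDensity dQ) := by rw [key1]
  let R := rotIso n c s h
  have hcompQ : dQ ∘ R.toMeasureEquiv = dQ := by
    funext z
    simp only [Function.comp_apply, LinearIsometryEquiv.coe_toMeasureEquiv, dQ]
    rw [R.norm_map]
  have rotInv : Measure.map R.toMeasureEquiv (volume.withDensity dQ) = volume.withDensity dQ := by
    calc Measure.map R.toMeasureEquiv (volume.withDensity dQ)
        = Measure.map R.toMeasureEquiv (volume.withDensity (dQ ∘ R.toMeasureEquiv)) := by
          rw [hcompQ]
      _ = (Measure.map R.toMeasureEquiv volume).withDensity dQ :=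
          map_withDensity_comp R.toMeasureEquiv volume hdQ
      _ = volume.withDensity dQ := by
          have := R.measurePreserving.map_eq
          simp only [LinearIsometryEquiv.coe_toMeasureEquiv]
          rw [this]
  have hT : Measurable (fun p : Wn n × Wn n => c • p.1 + s • p.2) :=
    (measurable_fst.const_smul c).add (measurable_snd.const_smul s)
  have hcompT : (fun p : Wn n × Wn n => c • p.1 + s • p.2) ∘ (splitEquiv n)
      = (Prod.fst ∘ (splitEquiv n)) ∘ R.toMeasureEquiv := by
    funext z
    ext i
    rfl
  calc Measure.map (fun p : Wn n × Wn n => c • p.1 + s • p.2)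
        ((stdGaussian n).prod (stdGaussian n))
      = Measure.map (fun p : Wn n × Wn n => c • p.1 + s • p.2)
          (Measure.map (splitEquiv n) (volume.withDensity dQ)) := by rw [prodEq]
    _ = Measure.map ((fun p : Wn n × Wn n => c • p.1 + s • p.2) ∘ (splitEquiv n))
          (volume.withDensity dQ) := Measure.map_map hT (splitEquiv n).measurable
    _ = Measure.map ((Prod.fst ∘ (splitEquiv n)) ∘ R.toMeasureEquiv)
          (volume.withDensity dQ) := by rw [hcompT]
    _ = Measure.map (Prod.fst ∘ (splitEquiv n))
          (Measure.map R.toMeasureEquiv (volume.withDensity dQ)) :=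
        (Measure.map_map (measurable_fst.comp (splitEquiv n).measurable)
          R.toMeasureEquiv.measurable).symm
    _ = Measure.map (Prod.fst ∘ (splitEquiv n)) (volume.withDensity dQ) := by rw [rotInv]
    _ = Measure.map Prod.fst (Measure.map (splitEquiv n) (volume.withDensity dQ)) :=
        (Measure.map_map measurable_fst (splitEquiv n).measurable).symm
    _ = Measure.map Prod.fst ((stdGaussian n).prod (stdGaussian n)) := by rw [← prodEq]
    _ = stdGaussian n := by rw [Measure.map_fst_prod]; simp

lemma integrable_poly_gauss (n N : ℕ) :
    Integrable (fun x : Wn n =>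
      (1 + ‖x‖) ^ N * ((2 * π) ^ (-(n : ℝ) / 2) * rexp (-‖x‖ ^ 2 / 2))) := by
  have hg : Integrable (fun x : Wn n =>
      ((2 * π) ^ (-(n : ℝ) / 2) * rexp ((N : ℝ) ^ 2)) * rexp (-(1/4) * ‖x‖ ^ 2)) :=
    (integrable_exp_neg_norm_sq n (1/4) (by norm_num)).const_mul _
  have hmeas : Continuous (fun x : Wn n =>
      (1 + ‖x‖) ^ N * ((2 * π) ^ (-(n : ℝ) / 2) * rexp (-‖x‖ ^ 2 / 2))) := by
    have h1 : Continuous fun x : Wn n => (1 + ‖x‖) ^ N :=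
      (continuous_const.add continuous_norm).pow N
    have h2 : Continuous fun x : Wn n => rexp (-‖x‖ ^ 2 / 2) :=
      ((continuous_norm.pow 2).neg.div_const 2).rexp
    exact h1.mul (continuous_const.mul h2)
  refine hg.mono' hmeas.aestronglyMeasurable ?_
  filter_upwards with x
  rw [Real.norm_eq_abs, abs_of_nonneg (by positivity)]
  have h1 : (1 + ‖x‖) ^ N ≤ rexp ((N : ℝ) * ‖x‖) := by
    calc (1 + ‖x‖) ^ N ≤ rexp ‖x‖ ^ N :=
          pow_le_pow_left₀ (by positivity)
            (by rw [add_comm]; exact Real.add_one_le_exp ‖x‖) N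
      _ = rexp ((N : ℝ) * ‖x‖) := by rw [← Real.exp_nat_mul]
  have h2 : (N : ℝ) * ‖x‖ + -‖x‖ ^ 2 / 2 ≤ (N : ℝ) ^ 2 + -(1/4) * ‖x‖ ^ 2 := by
    nlinarith [sq_nonneg (‖x‖ - 2 * (N : ℝ))]
  calc (1 + ‖x‖) ^ N * ((2 * π) ^ (-(n : ℝ) / 2) * rexp (-‖x‖ ^ 2 / 2))
      ≤ rexp ((N : ℝ) * ‖x‖) * ((2 * π) ^ (-(n : ℝ) / 2) * rexp (-‖x‖ ^ 2 / 2)) := by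
        have : (0:ℝ) ≤ (2 * π) ^ (-(n : ℝ) / 2) * rexp (-‖x‖ ^ 2 / 2) := by positivity
        exact mul_le_mul_of_nonneg_right h1 this
    _ = (2 * π) ^ (-(n : ℝ) / 2) * rexp ((N : ℝ) * ‖x‖ + -‖x‖ ^ 2 / 2) := by
        rw [Real.exp_add]; ring
    _ ≤ (2 * π) ^ (-(n : ℝ) / 2) * rexp ((N : ℝ) ^ 2 + -(1/4) * ‖x‖ ^ 2) := by
        have : (0:ℝ) ≤ (2 * π) ^ (-(n : ℝ) / 2) := by positivity
        exact mul_le_mul_of_nonneg_left (Real.exp_le_exp.2 h2) this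
    _ = (2 * π) ^ (-(n : ℝ) / 2) * rexp ((N : ℝ) ^ 2) * rexp (-(1/4) * ‖x‖ ^ 2) := by
        rw [Real.exp_add]; ring

lemma integrable_of_poly (n : ℕ) (g : Wn n → ℝ) (hc : Continuous g) (C : ℝ) (N : ℕ)
    (hb : ∀ x, |g x| ≤ C * (1 + ‖x‖) ^ N) : Integrable g (stdGaussian n) := by
  rw [stdGaussian, integrable_withDensity_iff (dens1_measurable n)
    (Filter.Eventually.of_forall fun x => ENNReal.ofReal_lt_top)]
  refine Integrable.mono' ((integrable_poly_gauss n N).const_mul C) ?_ ?_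
  · have hcd : Continuous (fun x : Wn n =>
        g x * ((2 * π) ^ (-(n : ℝ) / 2) * rexp (-‖x‖ ^ 2 / 2))) := by
      have h2 : Continuous fun x : Wn n => rexp (-‖x‖ ^ 2 / 2) :=
        ((continuous_norm.pow 2).neg.div_const 2).rexp
      exact hc.mul (continuous_const.mul h2)
    apply hcd.aestronglyMeasurable.congr
    filter_upwards with x
    rw [ENNReal.toReal_ofReal (by positivity)]
  · filter_upwards with x
    have hd : (0:ℝ) ≤ (2 * π) ^ (-(n : ℝ) / 2) * rexp (-‖x‖ ^ 2 / 2) := by positivity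
    rw [Real.norm_eq_abs, ENNReal.toReal_ofReal hd, abs_mul, abs_of_nonneg hd]
    calc |g x| * ((2 * π) ^ (-(n : ℝ) / 2) * rexp (-‖x‖ ^ 2 / 2))
        ≤ C * (1 + ‖x‖) ^ N * ((2 * π) ^ (-(n : ℝ) / 2) * rexp (-‖x‖ ^ 2 / 2)) :=
          mul_le_mul_of_nonneg_right (hb x) hd
      _ = C * ((1 + ‖x‖) ^ N * ((2 * π) ^ (-(n : ℝ) / 2) * rexp (-‖x‖ ^ 2 / 2))) := by ring

lemma convex_lower (Φ : ℝ → ℝ) (hΦ : ConvexOn ℝ Set.univ Φ) :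
    ∃ A B : ℝ, 0 ≤ A ∧ 0 ≤ B ∧ ∀ u, -(A + B * |u|) ≤ Φ u := by
  refine ⟨2 * |Φ 0| + |Φ 1| + |Φ (-1)|, 2 * |Φ 0| + |Φ 1| + |Φ (-1)|,
    by positivity, by positivity, fun u => ?_⟩
  rcases le_total u (-1) with hu | hu
  · have hu0 : (0:ℝ) < -u := by linarith
    have hne : -u ≠ 0 := ne_of_gt hu0
    have key := hΦ.2 (Set.mem_univ (0:ℝ)) (Set.mem_univ u)
      (show (0:ℝ) ≤ 1 - 1/(-u) by rw [sub_nonneg, div_le_one hu0]; linarith)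
      (show (0:ℝ) ≤ 1/(-u) by positivity) (by ring)
    simp only [smul_eq_mul, mul_zero, zero_add] at key
    have hpt : (1/(-u)) * u = -1 := by field_simp [show u ≠ 0 by linarith]
    rw [hpt] at key
    -- key : Φ (-1) ≤ (1 - 1/(-u)) * Φ 0 + (1/(-u)) * Φ u
    have hu' : u ≠ 0 := by intro h; rw [h] at hu0; simp at hu0
    have h4 : (-u) * ((1 - 1/(-u)) * Φ 0 + (1/(-u)) * Φ u) = ((-u) - 1) * Φ 0 + Φ u := by
      field_simp [hu']; try ring
    have h3 : (-u) * Φ (-1) ≤ ((-u) - 1) * Φ 0 + Φ u := by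
      have := mul_le_mul_of_nonneg_left key hu0.le
      rw [h4] at this; exact this
    rw [abs_of_nonpos (by linarith : u ≤ 0)]
    nlinarith [le_abs_self (Φ 0), neg_abs_le (Φ 0), le_abs_self (Φ (-1)), neg_abs_le (Φ (-1)),
      abs_nonneg (Φ 0), abs_nonneg (Φ 1), abs_nonneg (Φ (-1)),
      mul_le_mul_of_nonneg_left (neg_abs_le (Φ (-1))) hu0.le,
      mul_le_mul_of_nonneg_left (le_abs_self (Φ 0)) (by linarith : (0:ℝ) ≤ -u - 1)]
  rcases le_total 1 u with hu2 | hu2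
  · have hu0 : (0:ℝ) < u := by linarith
    have key := hΦ.2 (Set.mem_univ (0:ℝ)) (Set.mem_univ u)
      (show (0:ℝ) ≤ 1 - 1/u by rw [sub_nonneg, div_le_one hu0]; linarith)
      (show (0:ℝ) ≤ 1/u by positivity) (by ring)
    simp only [smul_eq_mul, mul_zero, zero_add] at key
    have hpt : (1/u) * u = 1 := by field_simp
    rw [hpt] at key
    have h4 : u * ((1 - 1/u) * Φ 0 + (1/u) * Φ u) = (u - 1) * Φ 0 + Φ u := by
      field_simp [ne_of_gt hu0]; try ring
    have h3 : u * Φ 1 ≤ (u - 1) * Φ 0 + Φ u := by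
      have := mul_le_mul_of_nonneg_left key hu0.le
      rw [h4] at this; exact this
    rw [abs_of_nonneg hu0.le]
    nlinarith [le_abs_self (Φ 0), neg_abs_le (Φ 0), le_abs_self (Φ 1), neg_abs_le (Φ 1),
      abs_nonneg (Φ 0), abs_nonneg (Φ 1), abs_nonneg (Φ (-1)),
      mul_le_mul_of_nonneg_left (neg_abs_le (Φ 1)) hu0.le,
      mul_le_mul_of_nonneg_left (le_abs_self (Φ 0)) (by linarith : (0:ℝ) ≤ u - 1)]
  · -- -1 ≤ u ≤ 1
    have h1 := hΦ.2 (Set.mem_univ u) (Set.mem_univ (-u))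
      (show (0:ℝ) ≤ 1/2 by norm_num) (show (0:ℝ) ≤ 1/2 by norm_num)
      (show (1:ℝ)/2 + 1/2 = 1 by norm_num)
    simp only [smul_eq_mul] at h1
    have hpt : (1/2) * u + (1/2) * (-u) = 0 := by ring
    rw [hpt] at h1
    have h2 := hΦ.2 (Set.mem_univ (-1:ℝ)) (Set.mem_univ (1:ℝ))
      (show (0:ℝ) ≤ (1+u)/2 by linarith) (show (0:ℝ) ≤ (1-u)/2 by linarith)
      (show (1+u)/2 + (1-u)/2 = 1 by ring)
    simp only [smul_eq_mul] at h2
    have hpt2 : ((1+u)/2) * (-1) + ((1-u)/2) * 1 = -u := by ring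
    rw [hpt2] at h2
    have e2 : Φ (-u) ≤ |Φ (-1)| + |Φ 1| := by
      calc Φ (-u) ≤ ((1+u)/2) * Φ (-1) + ((1-u)/2) * Φ 1 := h2
        _ ≤ ((1+u)/2) * |Φ (-1)| + ((1-u)/2) * |Φ 1| := by
            have ha : (0:ℝ) ≤ (1+u)/2 := by linarith
            have hb : (0:ℝ) ≤ (1-u)/2 := by linarith
            exact add_le_add (mul_le_mul_of_nonneg_left (le_abs_self _) ha)
              (mul_le_mul_of_nonneg_left (le_abs_self _) hb)
        _ ≤ 1 * |Φ (-1)| + 1 * |Φ 1| := by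
            have ha : (1+u)/2 ≤ 1 := by linarith
            have hb : (1-u)/2 ≤ 1 := by linarith
            exact add_le_add (mul_le_mul_of_nonneg_right ha (abs_nonneg _))
              (mul_le_mul_of_nonneg_right hb (abs_nonneg _))
        _ = |Φ (-1)| + |Φ 1| := by ring
    have hB : (0:ℝ) ≤ (2 * |Φ 0| + |Φ 1| + |Φ (-1)|) * |u| :=
      mul_nonneg (by positivity) (abs_nonneg u)
    nlinarith [neg_abs_le (Φ 0), abs_nonneg (Φ 0)]

/-- **Non-expansivity of the Ornstein–Uhlenbeck semigroup on Orlicz integrals.**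
For `Φ` convex, `f ∈ C⁰_poly(ℝⁿ)` with `Φ∘f` integrable w.r.t. `γ`, and `t ≥ 0`,
`∫ Φ(P_t f) dγ ≤ ∫ Φ(f) dγ`. -/
theorem ou_nonexpansive (n : ℕ) (Φ : ℝ → ℝ) (hΦ : ConvexOn ℝ Set.univ Φ)
    (f : EuclideanSpace ℝ (Fin n) → ℝ) (hf : CPoly n 0 f)
    (hint : Integrable (fun x => Φ (f x)) (stdGaussian n))
    (t : ℝ) (ht : 0 ≤ t) :
    ∫ x, Φ (ouSemigroup n t f x) ∂stdGaussian n ≤ ∫ x, Φ (f x) ∂stdGaussian n := by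
  haveI hP : IsProbabilityMeasure (stdGaussian n) := stdGaussian_isProb n
  set γ := stdGaussian n with hγ
  set c : ℝ := Real.exp (-t) with hc
  set s : ℝ := Real.sqrt (1 - Real.exp (-2 * t)) with hs
  have hcs : c ^ 2 + s ^ 2 = 1 := by
    have h1 : Real.exp (-2 * t) ≤ 1 := Real.exp_le_one_iff.2 (by linarith)
    have h2 : c ^ 2 = Real.exp (-2 * t) := by
      rw [hc, sq, ← Real.exp_add]; ring_nf
    rw [h2, hs, Real.sq_sqrt (by linarith)]
    ring
  set T : Wn n × Wn n → Wn n := fun p => c • p.1 + s • p.2 with hT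
  have hTmap : Measure.map T (γ.prod γ) = γ := stdGaussian_map_rot n c s hcs
  have hTmeas : Measurable T :=
    (measurable_fst.const_smul c).add (measurable_snd.const_smul s)
  have hcontf : Continuous f := hf.1.continuous
  have hfint : Integrable f γ := by
    obtain ⟨C, N, hb⟩ := hf.2 0 le_rfl
    refine integrable_of_poly n f hcontf C N fun x => ?_
    have := hb x
    rwa [norm_iteratedFDeriv_zero, Real.norm_eq_abs] at this
  have hΦcont : Continuous Φ := by
    rw [← continuousOn_univ]
    exact hΦ.continuousOn isOpen_univ
  have hfT : Integrable (f ∘ T) (γ.prod γ) := by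
    rw [← hTmap] at hfint
    exact (integrable_map_measure hcontf.aestronglyMeasurable hTmeas.aemeasurable).mp hfint
  have hΦfT : Integrable ((fun x => Φ (f x)) ∘ T) (γ.prod γ) := by
    rw [← hTmap] at hint
    exact (integrable_map_measure (hΦcont.comp hcontf).aestronglyMeasurable
      hTmeas.aemeasurable).mp hint
  have hPeq : ∀ x, ouSemigroup n t f x = ∫ y, (f ∘ T) (x, y) ∂γ := fun x => rfl
  have hPi : Integrable (fun x => ouSemigroup n t f x) γ := by
    have := hfT.integral_prod_left
    simpa [hPeq] using this
  have hG : Integrable (fun x => ∫ y, Φ (f (T (x, y))) ∂γ) γ := by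
    have := hΦfT.integral_prod_left
    simpa using this
  have hae1 := hfT.prod_right_ae
  have hae2 := hΦfT.prod_right_ae
  have hjen : ∀ᵐ x ∂γ, Φ (ouSemigroup n t f x) ≤ ∫ y, Φ (f (T (x, y))) ∂γ := by
    filter_upwards [hae1, hae2] with x h1 h2
    have hjx := hΦ.map_integral_le (hΦcont.continuousOn) isClosed_univ
      (Filter.Eventually.of_forall fun y => Set.mem_univ _) h1 h2
    rw [hPeq x]
    exact hjx
  obtain ⟨A, B, hA, hB, hAB⟩ := convex_lower Φ hΦ
  have hΦP_meas : AEStronglyMeasurable (fun x => Φ (ouSemigroup n t f x)) γ :=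
    hΦcont.comp_aestronglyMeasurable hPi.aestronglyMeasurable
  have habs : Integrable (fun x => Φ (ouSemigroup n t f x)) γ := by
    refine Integrable.mono'
      (g := fun x => |∫ y, Φ (f (T (x, y))) ∂γ| + (A + B * |ouSemigroup n t f x|))
      (hG.abs.add ((integrable_const A).add (hPi.abs.const_mul B))) hΦP_meas ?_
    filter_upwards [hjen] with x hx
    rw [Real.norm_eq_abs, abs_le]
    constructor
    · have := hAB (ouSemigroup n t f x)
      have h0 : 0 ≤ |∫ y, Φ (f (T (x, y))) ∂γ| := abs_nonneg _
      nlinarith [mul_nonneg hB (abs_nonneg (ouSemigroup n t f x))]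
    · exact le_trans (le_trans hx (le_abs_self _)) (by
        nlinarith [mul_nonneg hB (abs_nonneg (ouSemigroup n t f x))])
  calc ∫ x, Φ (ouSemigroup n t f x) ∂γ
      ≤ ∫ x, (∫ y, Φ (f (T (x, y))) ∂γ) ∂γ := integral_mono_ae habs hG hjen
    _ = ∫ p : Wn n × Wn n, Φ (f (T p)) ∂(γ.prod γ) :=
        integral_integral (f := fun x y => Φ (f (T (x, y)))) hΦfT
    _ = ∫ x, Φ (f x) ∂(Measure.map T (γ.prod γ)) :=
        (integral_map (f := fun x => Φ (f x)) hTmeas.aemeasurable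
          ((hΦcont.comp hcontf).aestronglyMeasurable)).symm
    _ = ∫ x, Φ (f x) ∂γ := by rw [hTmap]
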